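/- Let π and π̂ be positive probability densities on ℝᵈ and suppose there exist 0 < γ_lo ≤ γ_hi < ∞ with γ_lo ≤ π̂(x)/π(x) ≤ γ_hi for all x. Then for all x, y: |log(π(y)/π̂(y)) − log(π(x)/π̂(x))| ≤ log(γ_hi/γ_lo), and consequently the delayed-acceptance probability satisfies α_DA(x,y) ≥ (γ_lo/γ_hi)·α_MH(x,y), where α_DA(x,y) = min(1, π̂(y)q(y,x)/(π̂(x)q(x,y)))·min(1, (π(y)/π̂(y))/(π(x)/π̂(x))) and α_MH(x,y) = min(1, π(y)q(y,x)/(π(x)q(x,y))), for any positive proposal density q. -/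

import Mathlib

theorem stmt_12 {d : ℕ} (π πhat : EuclideanSpace ℝ (Fin d) → ℝ)
    (hπ : ∀ x, 0 < π x) (hπhat : ∀ x, 0 < πhat x)
    (γlo γhi : ℝ) (hlo : 0 < γlo) (hlohi : γlo ≤ γhi)
    (hbound : ∀ x, γlo ≤ πhat x / π x ∧ πhat x / π x ≤ γhi)
    (q : EuclideanSpace ℝ (Fin d) → EuclideanSpace ℝ (Fin d) → ℝ)
    (hq : ∀ x y, 0 < q x y) :
    ∀ x y,
      |Real.log (π y / πhat y) - Real.log (π x / πhat x)| ≤ Real.log (γhi / γlo) ∧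
      min 1 (πhat y * q y x / (πhat x * q x y)) *
        min 1 ((π y / πhat y) / (π x / πhat x))
        ≥ (γlo / γhi) * min 1 (π y * q y x / (π x * q x y)) := by
  intro x y
  have hhi : 0 < γhi := lt_of_lt_of_le hlo hlohi
  have hpx := hπ x; have hpy := hπ y
  have hhx := hπhat x; have hhy := hπhat y
  have hqxy := hq x y; have hqyx := hq y x
  set A := πhat y * q y x / (πhat x * q x y) with hA
  set B := (π y / πhat y) / (π x / πhat x) with hBdef
  set M := π y * q y x / (π x * q x y) with hM
  have hApos : 0 < A := by positivity
  have hBpos : 0 < B := by positivity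
  have hMpos : 0 < M := by positivity
  have hAB : A * B = M := by
    rw [hA, hBdef, hM]
    field_simp
  -- bounds on B
  have hrx := hbound x
  have hry := hbound y
  have hBform : B = (πhat x / π x) / (πhat y / π y) := by
    rw [hBdef]
    field_simp
  have hBlo : γlo / γhi ≤ B := by
    rw [hBform]
    gcongr <;> first | positivity | exact hrx.1 | exact hry.2
  have hBhi : B ≤ γhi / γlo := by
    rw [hBform]
    gcongr
    · exact hrx.2
    · exact hry.1
  constructor
  · -- log bound
    have h1 : Real.log (π y / πhat y) - Real.log (π x / πhat x) = Real.log B :=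
      (Real.log_div (by positivity) (by positivity)).symm
    rw [h1, abs_le]
    constructor
    · have : Real.log (γlo / γhi) ≤ Real.log B :=
        Real.log_le_log (by positivity) hBlo
      rw [Real.log_div (ne_of_gt hlo) (ne_of_gt hhi)] at this
      rw [Real.log_div (ne_of_gt hhi) (ne_of_gt hlo)]
      linarith
    · exact Real.log_le_log hBpos hBhi
  · -- probability bound
    set c := γlo / γhi with hc
    have hcpos : 0 < c := by positivity
    have hc1 : c ≤ 1 := div_le_one_of_le₀ hlohi (le_of_lt hhi)
    have hcB : c ≤ B := hBlo
    have hminM : min 1 M ≤ 1 := min_le_left _ _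
    have hcB1 : c * B ≤ 1 := by
      calc c * B ≤ c * (γhi / γlo) := mul_le_mul_of_nonneg_left hBhi hcpos.le
        _ = 1 := by rw [hc]; field_simp
    have hminMM : min 1 M ≤ M := min_le_right _ _
    have h0minM : 0 ≤ min 1 M := le_min zero_le_one hMpos.le
    rcases le_or_gt 1 A with hA1 | hA1 <;> rcases le_or_gt 1 B with hB1 | hB1
    · rw [min_eq_left hA1, min_eq_left hB1, mul_one]
      calc c * min 1 M ≤ c * 1 := mul_le_mul_of_nonneg_left hminM hcpos.le
        _ = c := mul_one c
        _ ≤ 1 := hc1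
    · rw [min_eq_left hA1, min_eq_right hB1.le, one_mul]
      calc c * min 1 M ≤ c * 1 := mul_le_mul_of_nonneg_left hminM hcpos.le
        _ = c := mul_one c
        _ ≤ B := hcB
    · rw [min_eq_right hA1.le, min_eq_left hB1, mul_one]
      calc c * min 1 M ≤ c * M := mul_le_mul_of_nonneg_left hminMM hcpos.le
        _ = A * (c * B) := by rw [← hAB]; ring
        _ ≤ A * 1 := mul_le_mul_of_nonneg_left hcB1 hApos.le
        _ = A := mul_one A
    · rw [min_eq_right hA1.le, min_eq_right hB1.le, hAB]
      calc c * min 1 M ≤ 1 * min 1 M := mul_le_mul_of_nonneg_right hc1 h0minM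
        _ = min 1 M := one_mul _
        _ ≤ M := hminMM
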